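/- Let ρ = (1/2)(I + r₁X + r₂Y + r₃Z) be a 2×2 Hermitian trace-one matrix with r = √(r₁² + r₂² + r₃²) ≤ 1 (a qubit density matrix with Bloch vector (r₁,r₂,r₃)), where X, Y, Z are the Pauli matrices and I the 2×2 identity. Let S denote the 4×4 swap matrix on ℂ² ⊗ ℂ² (S(u ⊗ v) = v ⊗ u), and define R = (ρ ⊗ (I/2))·S + S·(ρ ⊗ (I/2)), i.e. the anticommutator {ρ ⊗ I/2, S}. Then R is Hermitian with trace 1, and its multiset of eigenvalues is {−1/2, 1/2, (1−r)/2, (1+r)/2}. -/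

import Mathlib

open Matrix
open scoped Kronecker

namespace TemporalPDO

/-- Pauli `X`. -/
def pX : Matrix (Fin 2) (Fin 2) ℂ := !![0, 1; 1, 0]
/-- Pauli `Y`. -/
def pY : Matrix (Fin 2) (Fin 2) ℂ := !![0, -Complex.I; Complex.I, 0]
/-- Pauli `Z`. -/
def pZ : Matrix (Fin 2) (Fin 2) ℂ := !![1, 0; 0, -1]

/-- The swap operator on `ℂ² ⊗ ℂ²`: `S(u ⊗ v) = v ⊗ u`. -/
def swap : Matrix (Fin 2 × Fin 2) (Fin 2 × Fin 2) ℂ :=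
  Matrix.of fun p q => if p.1 = q.2 ∧ p.2 = q.1 then 1 else 0

open Polynomial

/-- An explicit equivalence `Fin 2 × Fin 2 ≃ Fin 4`. -/
def e4 : Fin 2 × Fin 2 ≃ Fin 4 where
  toFun p := ![![0, 1], ![2, 3]] p.1 p.2
  invFun k := ![(0, 0), (0, 1), (1, 0), (1, 1)] k
  left_inv := by decide
  right_inv := by decide

lemma charpoly_unitary_conj {n : Type*} [Fintype n] [DecidableEq n]
    (U D : Matrix n n ℂ) (hU : U * star U = 1) :
    (U * D * star U).charpoly = D.charpoly := by
  have hmap : U.map (C : ℂ →+* ℂ[X]) * (star U).map (C : ℂ →+* ℂ[X]) = 1 := by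
    rw [← Matrix.map_mul, hU, Matrix.map_one _ (map_zero _) (map_one _)]
  have hcm : charmatrix (U * D * star U)
      = U.map (C : ℂ →+* ℂ[X]) * charmatrix D * (star U).map (C : ℂ →+* ℂ[X]) := by
    unfold charmatrix
    rw [Matrix.mul_sub, Matrix.sub_mul]
    congr 1
    · have h1 : U.map (C : ℂ →+* ℂ[X]) * Matrix.scalar n (X : ℂ[X])
          = Matrix.scalar n (X : ℂ[X]) * U.map (C : ℂ →+* ℂ[X]) :=
        (Matrix.scalar_commute (X : ℂ[X]) (fun r' => Commute.all _ _) _).eq.symm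
      rw [h1, mul_assoc, hmap, mul_one]
    · simp only [RingHom.mapMatrix_apply]
      rw [Matrix.map_mul, Matrix.map_mul]
  rw [Matrix.charpoly, Matrix.charpoly, hcm, det_mul, det_mul, mul_right_comm,
    ← det_mul, hmap, det_one, one_mul]

lemma isHermitian_charpoly {n : Type*} [Fintype n] [DecidableEq n]
    {A : Matrix n n ℂ} (hA : A.IsHermitian) :
    A.charpoly = ∏ i, (X - C ((hA.eigenvalues i : ℝ) : ℂ)) := by
  conv_lhs => rw [hA.spectral_theorem, Unitary.conjStarAlgAut_apply]
  rw [charpoly_unitary_conj _ _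
    (Matrix.mem_unitaryGroup_iff.mp (Matrix.IsHermitian.eigenvectorUnitary hA).2)]
  have hcm : charmatrix (Matrix.diagonal (RCLike.ofReal ∘ hA.eigenvalues) : Matrix n n ℂ)
      = Matrix.diagonal fun i => X - C ((hA.eigenvalues i : ℝ) : ℂ) := by
    ext i j
    by_cases h : i = j
    · subst h
      simp
    · simp [h, Matrix.diagonal_apply_ne _ h]
  rw [Matrix.charpoly, hcm, det_diagonal]

lemma eval_charpoly' {n : Type*} [Fintype n] [DecidableEq n] (A : Matrix n n ℂ) (x : ℂ) :
    (A.charpoly).eval x = (Matrix.diagonal (fun _ => x) - A).det := by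
  rw [Matrix.charpoly, ← Polynomial.coe_evalRingHom, RingHom.map_det]
  congr 1
  ext i j
  by_cases h : i = j <;>
    simp [h, charmatrix_apply, Matrix.diagonal_apply]

set_option maxHeartbeats 2000000 in
/-- for a qubit state `ρ` with Bloch vector `(r₁, r₂, r₃)` of
norm `r ≤ 1`, the two-time pseudo-density operator
`R = {ρ ⊗ I/2, SWAP}` is Hermitian with trace `1` and has eigenvalue multiset
`{−1/2, 1/2, (1−r)/2, (1+r)/2}`. -/
theorem temporal_pdo_spectrum
    (r₁ r₂ r₃ : ℝ) (hr : Real.sqrt (r₁ ^ 2 + r₂ ^ 2 + r₃ ^ 2) ≤ 1) :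
    ∃ hR : (((1 / 2 : ℂ) • (1 + (r₁ : ℂ) • pX + (r₂ : ℂ) • pY + (r₃ : ℂ) • pZ)
          ⊗ₖ ((1 / 2 : ℂ) • (1 : Matrix (Fin 2) (Fin 2) ℂ))) * swap +
        swap * ((1 / 2 : ℂ) • (1 + (r₁ : ℂ) • pX + (r₂ : ℂ) • pY + (r₃ : ℂ) • pZ)
          ⊗ₖ ((1 / 2 : ℂ) • (1 : Matrix (Fin 2) (Fin 2) ℂ)))).IsHermitian,
      (((1 / 2 : ℂ) • (1 + (r₁ : ℂ) • pX + (r₂ : ℂ) • pY + (r₃ : ℂ) • pZ)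
          ⊗ₖ ((1 / 2 : ℂ) • (1 : Matrix (Fin 2) (Fin 2) ℂ))) * swap +
        swap * ((1 / 2 : ℂ) • (1 + (r₁ : ℂ) • pX + (r₂ : ℂ) • pY + (r₃ : ℂ) • pZ)
          ⊗ₖ ((1 / 2 : ℂ) • (1 : Matrix (Fin 2) (Fin 2) ℂ)))).trace = 1 ∧
      Finset.univ.val.map hR.eigenvalues =
        ({-(1 / 2), 1 / 2,
          (1 - Real.sqrt (r₁ ^ 2 + r₂ ^ 2 + r₃ ^ 2)) / 2,
          (1 + Real.sqrt (r₁ ^ 2 + r₂ ^ 2 + r₃ ^ 2)) / 2} : Multiset ℝ) := by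
  set s : ℝ := Real.sqrt (r₁ ^ 2 + r₂ ^ 2 + r₃ ^ 2) with hsdef
  have hs2 : (s : ℂ) ^ 2 = (r₁ : ℂ) ^ 2 + (r₂ : ℂ) ^ 2 + (r₃ : ℂ) ^ 2 := by
    have h0 : s ^ 2 = r₁ ^ 2 + r₂ ^ 2 + r₃ ^ 2 := Real.sq_sqrt (by positivity)
    exact_mod_cast congrArg (fun x : ℝ => (x : ℂ)) h0
  set M : Matrix (Fin 2 × Fin 2) (Fin 2 × Fin 2) ℂ :=
    ((1 / 2 : ℂ) • (1 + (r₁ : ℂ) • pX + (r₂ : ℂ) • pY + (r₃ : ℂ) • pZ)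
        ⊗ₖ ((1 / 2 : ℂ) • (1 : Matrix (Fin 2) (Fin 2) ℂ))) with hMdef
  set R : Matrix (Fin 2 × Fin 2) (Fin 2 × Fin 2) ℂ := M * swap + swap * M with hRdef
  have hsymm : ∀ k, e4.symm k = ![((0 : Fin 2), (0 : Fin 2)), (0, 1), (1, 0), (1, 1)] k :=
    fun k => rfl
  have hR4 : (Matrix.reindex e4 e4) R =
      !![(1 + (r₃ : ℂ)) / 2, ((r₁ : ℂ) - Complex.I * r₂) / 4,
          ((r₁ : ℂ) - Complex.I * r₂) / 4, 0;
        ((r₁ : ℂ) + Complex.I * r₂) / 4, 0, 1 / 2, ((r₁ : ℂ) - Complex.I * r₂) / 4;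
        ((r₁ : ℂ) + Complex.I * r₂) / 4, 1 / 2, 0, ((r₁ : ℂ) - Complex.I * r₂) / 4;
        0, ((r₁ : ℂ) + Complex.I * r₂) / 4, ((r₁ : ℂ) + Complex.I * r₂) / 4,
          (1 - (r₃ : ℂ)) / 2] := by
    ext i j
    fin_cases i <;> fin_cases j <;>
      simp [hRdef, hMdef, hsymm, swap, pX, pY, pZ, Matrix.mul_apply, Fintype.sum_prod_type,
        Fin.sum_univ_two, Matrix.one_apply] <;>
      ring
  have hherm : R.IsHermitian := by
    have h4 : ((Matrix.reindex e4 e4) R)ᴴ = (Matrix.reindex e4 e4) R := by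
      rw [hR4]
      ext i j
      fin_cases i <;> fin_cases j <;>
        simp [Matrix.conjTranspose_apply, Complex.ext_iff]
    have h5 := (Matrix.conjTranspose_reindex e4 e4 R).symm.trans h4
    exact (Matrix.reindex e4 e4).injective h5
  have key : R.charpoly =
      (Multiset.map (fun a : ℝ => X - C ((a : ℝ) : ℂ))
        ({-(1 / 2), 1 / 2, (1 - s) / 2, (1 + s) / 2} : Multiset ℝ)).prod := by
    rw [← Matrix.charpoly_reindex e4 R, hR4]
    apply Polynomial.funext
    intro x
    rw [eval_charpoly']
    have hB : Matrix.diagonal (fun _ : Fin 4 => x) -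
        !![(1 + (r₃ : ℂ)) / 2, ((r₁ : ℂ) - Complex.I * r₂) / 4,
            ((r₁ : ℂ) - Complex.I * r₂) / 4, 0;
          ((r₁ : ℂ) + Complex.I * r₂) / 4, 0, 1 / 2, ((r₁ : ℂ) - Complex.I * r₂) / 4;
          ((r₁ : ℂ) + Complex.I * r₂) / 4, 1 / 2, 0, ((r₁ : ℂ) - Complex.I * r₂) / 4;
          0, ((r₁ : ℂ) + Complex.I * r₂) / 4, ((r₁ : ℂ) + Complex.I * r₂) / 4,
            (1 - (r₃ : ℂ)) / 2] =
        !![x - (1 + (r₃ : ℂ)) / 2, -(((r₁ : ℂ) - Complex.I * r₂) / 4),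
            -(((r₁ : ℂ) - Complex.I * r₂) / 4), 0;
          -(((r₁ : ℂ) + Complex.I * r₂) / 4), x, -(1 / 2 : ℂ),
            -(((r₁ : ℂ) - Complex.I * r₂) / 4);
          -(((r₁ : ℂ) + Complex.I * r₂) / 4), -(1 / 2 : ℂ), x,
            -(((r₁ : ℂ) - Complex.I * r₂) / 4);
          0, -(((r₁ : ℂ) + Complex.I * r₂) / 4), -(((r₁ : ℂ) + Complex.I * r₂) / 4),
            x - (1 - (r₃ : ℂ)) / 2] := by
      ext i j
      fin_cases i <;> fin_cases j <;>
        simp [Matrix.diagonal_apply] <;> ring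
    rw [hB]
    simp only [Multiset.insert_eq_cons, Multiset.map_cons, Multiset.map_singleton,
      Multiset.prod_cons, Multiset.prod_singleton, eval_mul, eval_sub, eval_C, eval_X]
    simp [Matrix.det_succ_row_zero, Fin.sum_univ_succ, Fin.succAbove]
    push_cast
    ring_nf
    linear_combination ((x ^ 2 - 1 / 4) / 4) * hs2
      + ((r₂ : ℂ) ^ 2 * (x ^ 2 - 1 / 4) / 4) * Complex.I_sq
  have hsplit : Multiset.map (fun a : ℝ => X - C ((a : ℝ) : ℂ))
      ({-(1 / 2), 1 / 2, (1 - s) / 2, (1 + s) / 2} : Multiset ℝ)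
      = Multiset.map (fun z : ℂ => X - C z)
        (Multiset.map (fun a : ℝ => (a : ℂ))
          ({-(1 / 2), 1 / 2, (1 - s) / 2, (1 + s) / 2} : Multiset ℝ)) :=
    (Multiset.map_map _ _ _).symm
  have e2 : R.charpoly.roots
      = (({-(1 / 2), 1 / 2, (1 - s) / 2, (1 + s) / 2} : Multiset ℝ)).map
          (fun a : ℝ => (a : ℂ)) := by
    rw [key, hsplit, roots_multiset_prod_X_sub_C]
  refine ⟨hherm, ?_, ?_⟩
  · have htr := Matrix.trace_eq_sum_roots_charpoly R
    rw [e2] at htr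
    rw [htr]
    simp only [Multiset.insert_eq_cons, Multiset.map_cons, Multiset.map_singleton,
      Multiset.sum_cons, Multiset.sum_singleton]
    push_cast
    ring
  · have h1 : R.charpoly = (Multiset.map (fun z : ℂ => X - C z)
        (Finset.univ.val.map (fun i => ((hherm.eigenvalues i : ℝ) : ℂ)))).prod := by
      rw [isHermitian_charpoly hherm, Finset.prod_eq_multiset_prod]
      exact congrArg _ (Multiset.map_map _ _ _).symm
    have e1 : R.charpoly.roots
        = Finset.univ.val.map (fun i => ((hherm.eigenvalues i : ℝ) : ℂ)) := by
      rw [h1, roots_multiset_prod_X_sub_C]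
    apply Multiset.map_injective Complex.ofReal_injective
    calc (Finset.univ.val.map hherm.eigenvalues).map (fun a : ℝ => (a : ℂ))
        = Finset.univ.val.map (fun i => ((hherm.eigenvalues i : ℝ) : ℂ)) :=
          Multiset.map_map _ _ _
      _ = _ := e1.symm.trans e2

end TemporalPDO
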